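/- Let r, i, Δxr, Δyr, M, d₁, d₂ be real numbers. Then e^{-M}(r²+i²) ≤ (1/4)e^{-(M+d₁)}((r+Δxr)² + (i-Δyr)²) + (1/4)e^{-(M-d₁)}((r-Δxr)² + (i+Δyr)²) + (1/4)e^{-(M+d₂)}((r+Δyr)² + (i+Δxr)²) + (1/4)e^{-(M-d₂)}((r-Δyr)² + (i-Δxr)²). -/

import Mathlib

private lemma amgm (a p q : ℝ) (ha : 0 < a) (hp : 0 ≤ p) (hq : 0 ≤ q) :
    2 * Real.sqrt (p * q) ≤ a * p + a⁻¹ * q := by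
  have h1 : 0 ≤ a * p := mul_nonneg ha.le hp
  have h2 : 0 ≤ a⁻¹ * q := mul_nonneg (inv_nonneg.2 ha.le) hq
  have key : Real.sqrt (p * q) = Real.sqrt (a * p) * Real.sqrt (a⁻¹ * q) := by
    rw [← Real.sqrt_mul h1]
    congr 1
    field_simp
  nlinarith [sq_nonneg (Real.sqrt (a * p) - Real.sqrt (a⁻¹ * q)),
    Real.sq_sqrt h1, Real.sq_sqrt h2, Real.sqrt_nonneg (a*p), Real.sqrt_nonneg (a⁻¹*q)]

private lemma tri (A B C D : ℝ) :
    Real.sqrt ((A + C) ^ 2 + (B + D) ^ 2) ≤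
      Real.sqrt (A ^ 2 + B ^ 2) + Real.sqrt (C ^ 2 + D ^ 2) := by
  have := norm_add_le (⟨A, B⟩ : ℂ) ⟨C, D⟩
  simpa [Complex.norm_def, Complex.normSq, Complex.add_re, Complex.add_im, sq] using this

private lemma core (r i x y a b : ℝ) (ha : 0 < a) (hb : 0 < b) :
    r ^ 2 + i ^ 2 ≤
      1 / 4 * a * ((r + x) ^ 2 + (i - y) ^ 2) +
      1 / 4 * a⁻¹ * ((r - x) ^ 2 + (i + y) ^ 2) +
      1 / 4 * b * ((r + y) ^ 2 + (i + x) ^ 2) +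
      1 / 4 * b⁻¹ * ((r - y) ^ 2 + (i - x) ^ 2) := by
  set u := r ^ 2 - i ^ 2
  set v := 2 * r * i
  set P := x ^ 2 - y ^ 2
  set Q := 2 * x * y
  have h1 : 2 * Real.sqrt (((r + x) ^ 2 + (i - y) ^ 2) * ((r - x) ^ 2 + (i + y) ^ 2)) ≤
      a * ((r + x) ^ 2 + (i - y) ^ 2) + a⁻¹ * ((r - x) ^ 2 + (i + y) ^ 2) :=
    amgm _ _ _ ha (by positivity) (by positivity)
  have h2 : 2 * Real.sqrt (((r + y) ^ 2 + (i + x) ^ 2) * ((r - y) ^ 2 + (i - x) ^ 2)) ≤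
      b * ((r + y) ^ 2 + (i + x) ^ 2) + b⁻¹ * ((r - y) ^ 2 + (i - x) ^ 2) :=
    amgm _ _ _ hb (by positivity) (by positivity)
  have e1 : ((r + x) ^ 2 + (i - y) ^ 2) * ((r - x) ^ 2 + (i + y) ^ 2)
      = (u - P) ^ 2 + (v + Q) ^ 2 := by simp only [u, v, P, Q]; ring
  have e2 : ((r + y) ^ 2 + (i + x) ^ 2) * ((r - y) ^ 2 + (i - x) ^ 2)
      = (u + P) ^ 2 + (v - Q) ^ 2 := by simp only [u, v, P, Q]; ring
  rw [e1] at h1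
  rw [e2] at h2
  have htri := tri (u - P) (v + Q) (u + P) (v - Q)
  have e3 : (u - P + (u + P)) ^ 2 + (v + Q + (v - Q)) ^ 2 = (2 * (r ^ 2 + i ^ 2)) ^ 2 := by
    simp only [u, v]; ring
  rw [e3, Real.sqrt_sq (by positivity)] at htri
  linarith

theorem restricted_concavity (r i Δxr Δyr M d₁ d₂ : ℝ) :
    Real.exp (-M) * (r ^ 2 + i ^ 2) ≤
      (1 / 4) * Real.exp (-(M + d₁)) * ((r + Δxr) ^ 2 + (i - Δyr) ^ 2) +
      (1 / 4) * Real.exp (-(M - d₁)) * ((r - Δxr) ^ 2 + (i + Δyr) ^ 2) +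
      (1 / 4) * Real.exp (-(M + d₂)) * ((r + Δyr) ^ 2 + (i + Δxr) ^ 2) +
      (1 / 4) * Real.exp (-(M - d₂)) * ((r - Δyr) ^ 2 + (i - Δxr) ^ 2) := by
  have h := core r i Δxr Δyr (Real.exp (-d₁)) (Real.exp (-d₂))
    (Real.exp_pos _) (Real.exp_pos _)
  have hM := (Real.exp_pos (-M)).le
  have e1 : Real.exp (-(M + d₁)) = Real.exp (-M) * Real.exp (-d₁) := by
    rw [← Real.exp_add]; ring_nf
  have e2 : Real.exp (-(M - d₁)) = Real.exp (-M) * (Real.exp (-d₁))⁻¹ := by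
    rw [← Real.exp_neg, ← Real.exp_add]; ring_nf
  have e3 : Real.exp (-(M + d₂)) = Real.exp (-M) * Real.exp (-d₂) := by
    rw [← Real.exp_add]; ring_nf
  have e4 : Real.exp (-(M - d₂)) = Real.exp (-M) * (Real.exp (-d₂))⁻¹ := by
    rw [← Real.exp_neg, ← Real.exp_add]; ring_nf
  rw [e1, e2, e3, e4]
  calc Real.exp (-M) * (r ^ 2 + i ^ 2)
      ≤ Real.exp (-M) * (1 / 4 * Real.exp (-d₁) * ((r + Δxr) ^ 2 + (i - Δyr) ^ 2) +
        1 / 4 * (Real.exp (-d₁))⁻¹ * ((r - Δxr) ^ 2 + (i + Δyr) ^ 2) +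
        1 / 4 * Real.exp (-d₂) * ((r + Δyr) ^ 2 + (i + Δxr) ^ 2) +
        1 / 4 * (Real.exp (-d₂))⁻¹ * ((r - Δyr) ^ 2 + (i - Δxr) ^ 2)) :=
        mul_le_mul_of_nonneg_left h hM
    _ = _ := by ring
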